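/- (Congruence invariance) For any n×n Hermitian positive definite complex matrices M₀, M₁ and any invertible n×n complex matrix T, d_g(T M₀ T*, T M₁ T*) = d_g(M₀, M₁), where d_g(A, B) := ‖log(A^{-1/2} B A^{-1/2})‖_Fr and T* is the conjugate transpose of T. -/

import Mathlib

open Matrix Set
open scoped ComplexOrder

/-- Frobenius (Hilbert–Schmidt) norm of a complex matrix. -/
noncomputable def frob {n : ℕ} (M : Matrix (Fin n) (Fin n) ℂ) : ℝ :=
  Real.sqrt (M * Mᴴ).trace.re

/-- The (Hermitian positive definite) square root of a Hermitian positive definite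
matrix, via the continuous functional calculus. -/
noncomputable def msqrt {n : ℕ} (A : Matrix (Fin n) (Fin n) ℂ) : Matrix (Fin n) (Fin n) ℂ :=
  cfc Real.sqrt A

/-- `A^{-1/2}`, the inverse of the Hermitian square root. -/
noncomputable def minvsqrt {n : ℕ} (A : Matrix (Fin n) (Fin n) ℂ) : Matrix (Fin n) (Fin n) ℂ :=
  (msqrt A)⁻¹

/-- The unique Hermitian logarithm of a Hermitian positive definite matrix. -/
noncomputable def mlog {n : ℕ} (A : Matrix (Fin n) (Fin n) ℂ) : Matrix (Fin n) (Fin n) ℂ :=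
  cfc Real.log A

/-- Real power `A^t` of a Hermitian positive definite matrix, via the functional calculus. -/
noncomputable def mpow {n : ℕ} (A : Matrix (Fin n) (Fin n) ℂ) (t : ℝ) :
    Matrix (Fin n) (Fin n) ℂ :=
  cfc (fun x : ℝ => x ^ t) A

/-- The geodesic distance `d_g(A,B) = ‖log(A^{-1/2} B A^{-1/2})‖_Fr` on Hermitian
positive definite matrices. -/
noncomputable def dg {n : ℕ} (A B : Matrix (Fin n) (Fin n) ℂ) : ℝ :=
  frob (mlog (minvsqrt A * B * minvsqrt A))

/-- The geodesic `A ♯_τ B = A^{1/2} (A^{-1/2} B A^{-1/2})^τ A^{1/2}`. -/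
noncomputable def sharp {n : ℕ} (A B : Matrix (Fin n) (Fin n) ℂ) (τ : ℝ) :
    Matrix (Fin n) (Fin n) ℂ :=
  msqrt A * mpow (minvsqrt A * B * minvsqrt A) τ * msqrt A

namespace DgAux

variable {n : ℕ}

lemma contOn (f : ℝ → ℝ) (A : Matrix (Fin n) (Fin n) ℂ) :
    ContinuousOn f (spectrum ℝ A) :=
  Matrix.finite_real_spectrum.continuousOn f

lemma posDef_conj {M T : Matrix (Fin n) (Fin n) ℂ} (hM : M.PosDef) (hT : IsUnit T) :
    (T * M * Tᴴ).PosDef := by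
  refine Matrix.PosDef.of_dotProduct_mulVec_pos ?_ (fun x hx => ?_)
  · show (T * M * Tᴴ)ᴴ = _
    simp [Matrix.conjTranspose_mul, hM.isHermitian.eq, Matrix.mul_assoc]
  · have hTH : IsUnit Tᴴ := (Matrix.isUnit_conjTranspose T).2 hT
    have hy : Tᴴ *ᵥ x ≠ 0 := by
      have := (Matrix.mulVec_injective_iff_isUnit.mpr hTH)
      intro h
      exact hx (by simpa using this (h.trans (Matrix.mulVec_zero Tᴴ).symm))
    have := (Matrix.posDef_iff_dotProduct_mulVec.mp hM).2 hy
    rwa [Matrix.star_mulVec, Matrix.conjTranspose_conjTranspose,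
      ← Matrix.dotProduct_mulVec, Matrix.mulVec_mulVec, Matrix.mulVec_mulVec] at this

lemma spectrum_eq {M : Matrix (Fin n) (Fin n) ℂ} (hM : M.PosDef) :
    spectrum ℝ M = Set.range hM.isHermitian.eigenvalues :=
  Matrix.IsHermitian.spectrum_real_eq_range_eigenvalues hM.isHermitian

lemma msqrt_isHermitian (M : Matrix (Fin n) (Fin n) ℂ) : (msqrt M).IsHermitian :=
  (cfc_predicate Real.sqrt M : IsSelfAdjoint _)

lemma msqrt_sq {M : Matrix (Fin n) (Fin n) ℂ} (hM : M.PosDef) :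
    msqrt M * msqrt M = M := by
  unfold msqrt
  rw [← cfc_mul _ _ M (contOn _ M) (contOn _ M)]
  have h1 : (spectrum ℝ M).EqOn (fun x => Real.sqrt x * Real.sqrt x) id := by
    intro x hx
    rw [spectrum_eq hM] at hx
    obtain ⟨i, rfl⟩ := hx
    exact Real.mul_self_sqrt (hM.eigenvalues_pos i).le
  rw [cfc_congr h1, cfc_id ℝ M hM.isHermitian.isSelfAdjoint]

lemma msqrt_isUnit {M : Matrix (Fin n) (Fin n) ℂ} (hM : M.PosDef) :
    IsUnit (msqrt M) := by
  have h := hM.isUnit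
  rw [← msqrt_sq hM] at h
  rw [Matrix.isUnit_iff_isUnit_det] at h ⊢
  rw [Matrix.det_mul] at h
  exact isUnit_of_mul_isUnit_left h

lemma minvsqrt_mul {M : Matrix (Fin n) (Fin n) ℂ} (hM : M.PosDef) :
    minvsqrt M * msqrt M = 1 :=
  Matrix.nonsing_inv_mul _ ((Matrix.isUnit_iff_isUnit_det _).mp (msqrt_isUnit hM))

lemma mul_minvsqrt {M : Matrix (Fin n) (Fin n) ℂ} (hM : M.PosDef) :
    msqrt M * minvsqrt M = 1 :=
  Matrix.mul_nonsing_inv _ ((Matrix.isUnit_iff_isUnit_det _).mp (msqrt_isUnit hM))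

lemma minvsqrt_isHermitian (M : Matrix (Fin n) (Fin n) ℂ) :
    (minvsqrt M).IsHermitian :=
  (msqrt_isHermitian M).inv

lemma minvsqrt_star (M : Matrix (Fin n) (Fin n) ℂ) :
    star (minvsqrt M) = minvsqrt M :=
  minvsqrt_isHermitian M

/-- Conjugation by a unitary as a star algebra homomorphism. -/
noncomputable def conjSAH (U : Matrix (Fin n) (Fin n) ℂ)
    (hU : U * star U = 1) (hU' : star U * U = 1) :
    Matrix (Fin n) (Fin n) ℂ →⋆ₐ[ℂ] Matrix (Fin n) (Fin n) ℂ where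
  toFun x := U * x * star U
  map_one' := by
    show U * 1 * star U = 1
    rw [mul_one, hU]
  map_mul' x y := by
    show U * (x * y) * star U = U * x * star U * (U * y * star U)
    have h : U * x * star U * (U * y * star U) = U * x * (star U * U) * (y * star U) := by
      simp only [mul_assoc]
    rw [h, hU', mul_one]
    simp only [mul_assoc]
  map_zero' := by
    show U * 0 * star U = 0
    simp
  map_add' x y := by
    show U * (x + y) * star U = U * x * star U + U * y * star U
    rw [mul_add, add_mul]
  commutes' c := by
    show U * algebraMap ℂ _ c * star U = algebraMap ℂ _ c
    simp only [Algebra.algebraMap_eq_smul_one]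
    rw [Matrix.mul_smul, mul_one, Matrix.smul_mul, hU]
  map_star' x := by
    show U * star x * star U = star (U * x * star U)
    rw [StarMul.star_mul, StarMul.star_mul, star_star, mul_assoc]

lemma cfc_conj (f : ℝ → ℝ) (U C : Matrix (Fin n) (Fin n) ℂ)
    (hU : U * star U = 1) (hU' : star U * U = 1) (hC : IsSelfAdjoint C) :
    cfc f (U * C * star U) = U * cfc f C * star U := by
  have hcont : Continuous (conjSAH U hU hU') :=
    (continuous_const.mul continuous_id).mul continuous_const
  have hφa : IsSelfAdjoint (conjSAH U hU hU' C) := hC.map (conjSAH U hU hU')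
  exact ((conjSAH U hU hU').map_cfc f C (contOn f C) hcont hC hφa).symm

lemma frob_conj (U X : Matrix (Fin n) (Fin n) ℂ)
    (hU : U * star U = 1) (hU' : star U * U = 1) :
    frob (U * X * star U) = frob X := by
  unfold frob
  have h : (U * X * star U) * (U * X * star U)ᴴ = U * (X * Xᴴ) * star U := by
    rw [← Matrix.star_eq_conjTranspose (U * X * star U), ← Matrix.star_eq_conjTranspose X,
      StarMul.star_mul, StarMul.star_mul, star_star]
    calc U * X * star U * (U * (star X * star U))
        = U * X * ((star U * U) * (star X * star U)) := by
          simp only [mul_assoc]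
      _ = U * (X * star X) * star U := by
          rw [hU', one_mul]; simp only [mul_assoc]
  rw [h, Matrix.trace_mul_cycle, ← mul_assoc, hU', one_mul]

end DgAux

set_option maxHeartbeats 1000000 in
open DgAux in
theorem dg_congruence_invariant {n : ℕ} (M₀ M₁ T : Matrix (Fin n) (Fin n) ℂ)
    (h₀ : M₀.PosDef) (h₁ : M₁.PosDef) (hT : IsUnit T) :
    dg (T * M₀ * Tᴴ) (T * M₁ * Tᴴ) = dg M₀ M₁ := by
  set A : Matrix (Fin n) (Fin n) ℂ := T * M₀ * Tᴴ with hAdef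
  have hA : A.PosDef := posDef_conj h₀ hT
  set U : Matrix (Fin n) (Fin n) ℂ := minvsqrt A * T * msqrt M₀ with hUdef
  have hstarU : star U = msqrt M₀ * Tᴴ * minvsqrt A := by
    rw [hUdef, StarMul.star_mul, StarMul.star_mul, minvsqrt_star,
      (msqrt_isHermitian M₀).isSelfAdjoint.star_eq,
      Matrix.star_eq_conjTranspose T, mul_assoc]
  have hUU : U * star U = 1 := by
    rw [hstarU, hUdef]
    have h1 : minvsqrt A * T * msqrt M₀ * (msqrt M₀ * Tᴴ * minvsqrt A)
        = minvsqrt A * (T * (msqrt M₀ * msqrt M₀) * Tᴴ) * minvsqrt A := by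
      simp only [mul_assoc]
    rw [h1, msqrt_sq h₀, ← hAdef]
    calc minvsqrt A * A * minvsqrt A
        = minvsqrt A * (msqrt A * msqrt A) * minvsqrt A := by rw [msqrt_sq hA]
      _ = (minvsqrt A * msqrt A) * (msqrt A * minvsqrt A) := by simp only [mul_assoc]
      _ = 1 := by rw [minvsqrt_mul hA, mul_minvsqrt hA, one_mul]
  have hU'U : star U * U = 1 := mul_eq_one_comm.mp hUU
  have hC : IsSelfAdjoint (minvsqrt M₀ * M₁ * minvsqrt M₀) := by
    show star _ = _
    rw [StarMul.star_mul, StarMul.star_mul, minvsqrt_star,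
      h₁.isHermitian.isSelfAdjoint.star_eq, mul_assoc]
  have key : minvsqrt A * (T * M₁ * Tᴴ) * minvsqrt A
      = U * (minvsqrt M₀ * M₁ * minvsqrt M₀) * star U := by
    rw [hstarU, hUdef]
    symm
    calc minvsqrt A * T * msqrt M₀ * (minvsqrt M₀ * M₁ * minvsqrt M₀)
          * (msqrt M₀ * Tᴴ * minvsqrt A)
        = minvsqrt A * T * ((msqrt M₀ * minvsqrt M₀) * M₁ * (minvsqrt M₀ * msqrt M₀))
          * Tᴴ * minvsqrt A := by simp only [mul_assoc]
      _ = minvsqrt A * T * M₁ * Tᴴ * minvsqrt A := by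
          rw [mul_minvsqrt h₀, minvsqrt_mul h₀, one_mul, mul_one]
      _ = minvsqrt A * (T * M₁ * Tᴴ) * minvsqrt A := by simp only [mul_assoc]
  unfold dg
  rw [key]
  unfold mlog
  rw [cfc_conj Real.log U _ hUU hU'U hC]
  exact frob_conj U _ hUU hU'U
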